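/- Let d ≥ 1 be an integer and v ≥ 0 a real number. For every coupling μ of χ_d with itself, the negative monotone coupling μ_NM satisfies ∫ c_RLF dμ_NM ≤ ∫ c_RLF dμ. That is, among all probability measures on ℝ × ℝ with both marginals equal to χ_d, the negative monotone coupling minimizes the expected cost c_RLF. -/

import Mathlib

open MeasureTheory ProbabilityTheory Set
open scoped ENNReal

noncomputable section
def stdGaussian (d : ℕ) : Measure (EuclideanSpace ℝ (Fin d)) :=
  (Measure.pi fun _ : Fin d => gaussianReal 0 1).map
    (EuclideanSpace.equiv (Fin d) ℝ).symm
def chi (d : ℕ) : Measure ℝ := (stdGaussian d).map fun x => ‖x‖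

instance (d : ℕ) : IsProbabilityMeasure (stdGaussian d) :=
  Measure.isProbabilityMeasure_map (EuclideanSpace.equiv (Fin d) ℝ).symm.continuous.measurable.aemeasurable

instance (d : ℕ) : IsProbabilityMeasure (chi d) :=
  Measure.isProbabilityMeasure_map measurable_norm.aemeasurable

lemma chi_Iic_neg (d : ℕ) {a : ℝ} (ha : a < 0) : chi d (Iic a) = 0 := by
  rw [chi, Measure.map_apply measurable_norm measurableSet_Iic]
  convert measure_empty
  · ext x
    simp only [mem_preimage, mem_Iic, mem_empty_iff_false, iff_false]
    intro h
    exact absurd (le_trans (norm_nonneg x) h) (not_le.2 ha)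
  · infer_instance
def chiCDF (d : ℕ) (x : ℝ) : ℝ := (chi d (Set.Iic x)).toReal
def chiQuantile (d : ℕ) (u : ℝ) : ℝ := sInf {x : ℝ | u ≤ chiCDF d x}

lemma chiCDF_eq_cdf (d : ℕ) : chiCDF d = cdf (chi d) := by
  funext x; rw [chiCDF, cdf_eq_real, measureReal_def]

lemma chiCDF_nonneg (d : ℕ) (x : ℝ) : 0 ≤ chiCDF d x := ENNReal.toReal_nonneg

lemma chiCDF_le_one (d : ℕ) (x : ℝ) : chiCDF d x ≤ 1 := by
  rw [chiCDF_eq_cdf]; exact cdf_le_one _ _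

lemma chiCDF_mono (d : ℕ) : Monotone (chiCDF d) := by
  rw [chiCDF_eq_cdf]; exact monotone_cdf _

lemma chiCDF_neg (d : ℕ) {x : ℝ} (hx : x < 0) : chiCDF d x = 0 := by
  rw [chiCDF, chi_Iic_neg d hx, ENNReal.toReal_zero]

lemma chiQuantile_nonneg (d : ℕ) (u : ℝ) : 0 ≤ chiQuantile d u := by
  rcases le_or_gt u 0 with h | h
  · have : {x : ℝ | u ≤ chiCDF d x} = univ := by
      ext x; simp [h.trans (chiCDF_nonneg d x)]
    rw [chiQuantile, this, Real.sInf_of_not_bddBelow]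
    intro ⟨b, hb⟩
    exact absurd (hb (mem_univ (b-1))) (by norm_num)
  · exact Real.sInf_nonneg (fun x hx => by
      by_contra hneg
      rw [mem_setOf_eq, chiCDF_neg d (not_le.1 hneg)] at hx
      exact absurd (h.trans_le hx) (lt_irrefl 0))
lemma chiQuantile_le_iff (d : ℕ) {u : ℝ} (h0 : 0 < u) (h1 : u < 1) (a : ℝ) :
    chiQuantile d u ≤ a ↔ u ≤ chiCDF d a := by
  set S := {x : ℝ | u ≤ chiCDF d x} with hS
  have hbdd : BddBelow S := ⟨0, fun x hx => by
    by_contra hneg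
    rw [mem_setOf_eq, chiCDF_neg d (not_le.1 hneg)] at hx
    exact absurd (h0.trans_le hx) (lt_irrefl 0)⟩
  have hne : S.Nonempty := by
    have ht : Filter.Tendsto (chiCDF d) Filter.atTop (nhds 1) := by
      rw [chiCDF_eq_cdf]; exact tendsto_cdf_atTop _
    have hev : ∀ᶠ x in Filter.atTop, u < chiCDF d x := ht.eventually_const_lt h1
    obtain ⟨x, hx⟩ := hev.exists
    exact ⟨x, hx.le⟩
  constructor
  · intro hle
    have key : u ≤ chiCDF d (sInf S) := by
      have hrc : ContinuousWithinAt (chiCDF d) (Ici (sInf S)) (sInf S) := by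
        rw [chiCDF_eq_cdf]; exact (cdf (chi d)).right_continuous _
      have hrc' : Filter.Tendsto (chiCDF d) (nhdsWithin (sInf S) (Ioi (sInf S)))
          (nhds (chiCDF d (sInf S))) :=
        hrc.tendsto.mono_left (nhdsWithin_mono _ Ioi_subset_Ici_self)
      refine ge_of_tendsto hrc' ?_
      refine Filter.eventually_iff_exists_mem.2 ⟨Ioi (sInf S), self_mem_nhdsWithin, ?_⟩
      intro x hx
      obtain ⟨s, hsS, hs⟩ : ∃ s ∈ S, s < x := by
        by_contra hcon
        push_neg at hcon
        exact absurd (le_csInf hne (fun s hs => (hcon s hs))) (not_le.2 hx)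
      exact le_trans hsS (chiCDF_mono d hs.le)
    exact key.trans (chiCDF_mono d hle)
  · intro h
    exact csInf_le hbdd h
lemma chiQuantile_bddBelow (d : ℕ) {u : ℝ} (h0 : 0 < u) : BddBelow {x : ℝ | u ≤ chiCDF d x} :=
  ⟨0, fun x hx => by
    by_contra hneg
    rw [mem_setOf_eq, chiCDF_neg d (not_le.1 hneg)] at hx
    exact absurd (h0.trans_le hx) (lt_irrefl 0)⟩

lemma chiQuantile_nonempty (d : ℕ) {u : ℝ} (h1 : u < 1) : {x : ℝ | u ≤ chiCDF d x}.Nonempty := by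
  have ht : Filter.Tendsto (chiCDF d) Filter.atTop (nhds 1) := by
    rw [chiCDF_eq_cdf]; exact tendsto_cdf_atTop _
  obtain ⟨x, hx⟩ := (ht.eventually_const_lt h1).exists
  exact ⟨x, hx.le⟩

lemma chiQuantile_monoOn (d : ℕ) {u u' : ℝ} (h : u ≤ u') (h1 : u' < 1) :
    chiQuantile d u ≤ chiQuantile d u' := by
  rcases le_or_gt u 0 with hu | hu
  · have : chiQuantile d u = 0 := by
      have huniv : {x : ℝ | u ≤ chiCDF d x} = univ := by
        ext x; simp [hu.trans (chiCDF_nonneg d x)]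
      rw [chiQuantile, huniv, Real.sInf_of_not_bddBelow]
      intro ⟨b, hb⟩
      exact absurd (hb (mem_univ (b-1))) (by norm_num)
    rw [this]; exact chiQuantile_nonneg d u'
  · exact csInf_le_csInf (chiQuantile_bddBelow d hu) (chiQuantile_nonempty d h1)
      (fun x hx => le_trans h hx)

/-- Modified quantile function, measurable, a.e. equal on `[0,1]`. -/
def chiQ0 (d : ℕ) (u : ℝ) : ℝ := if u < 1 then chiQuantile d u else 0

lemma chiQ0_nonneg (d : ℕ) (u : ℝ) : 0 ≤ chiQ0 d u := by
  rw [chiQ0]; split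
  · exact chiQuantile_nonneg d u
  · exact le_refl 0

lemma measurable_chiQ0 (d : ℕ) : Measurable (chiQ0 d) := by
  apply measurable_of_Iic
  intro c
  rcases lt_or_ge c 0 with hc | hc
  · have : chiQ0 d ⁻¹' Iic c = ∅ := by
      ext u
      simp only [mem_preimage, mem_Iic, mem_empty_iff_false, iff_false, not_le]
      exact hc.trans_le (chiQ0_nonneg d u)
    rw [this]; exact MeasurableSet.empty
  · have : chiQ0 d ⁻¹' Iic c = {u | u < 1 ∧ chiQuantile d u ≤ c} ∪ Ici 1 := by
      ext u
      simp only [mem_preimage, mem_Iic, chiQ0, mem_union, mem_setOf_eq, mem_Ici]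
      split
      · next h => simp [h, h.le, not_le.2 h]
      · next h => simp [hc, not_lt.1 h]
    rw [this]
    refine MeasurableSet.union ?_ measurableSet_Ici
    have hlow : IsLowerSet {u | u < 1 ∧ chiQuantile d u ≤ c} := by
      intro a b hba ha
      exact ⟨lt_of_le_of_lt hba ha.1, le_trans (chiQuantile_monoOn d hba ha.1) ha.2⟩
    exact hlow.ordConnected.measurableSet
def muNM (d : ℕ) : Measure (ℝ × ℝ) :=
  ((volume : Measure ℝ).restrict (Set.Icc 0 1)).map
    fun u => (chiQuantile d u, chiQuantile d (1 - u))

lemma ae_Ioo : ∀ᵐ u ∂((volume : Measure ℝ).restrict (Icc 0 1)), u ∈ Ioo (0:ℝ) 1 := by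
  rw [ae_iff, Measure.restrict_apply']
  · refine measure_mono_null (t := {0, 1}) ?_ ?_
    · intro u ⟨hu1, hu2⟩
      simp only [mem_Ioo, not_and_or, not_lt] at hu1
      rcases hu1 with h | h
      · exact Or.inl (le_antisymm h hu2.1)
      · exact Or.inr (le_antisymm hu2.2 h)
    · exact ((finite_singleton (1:ℝ)).insert 0).measure_zero _
  · exact measurableSet_Icc

lemma measurable_f0 (d : ℕ) : Measurable (fun u => (chiQ0 d u, chiQ0 d (1 - u))) :=
  (measurable_chiQ0 d).prodMk ((measurable_chiQ0 d).comp (measurable_const.sub measurable_id))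

lemma muNM_eq (d : ℕ) : muNM d =
    ((volume : Measure ℝ).restrict (Set.Icc 0 1)).map (fun u => (chiQ0 d u, chiQ0 d (1 - u))) := by
  rw [muNM]
  apply Measure.map_congr
  filter_upwards [ae_Ioo] with u hu
  have h1 : u < 1 := hu.2
  have h2 : 1 - u < 1 := by linarith [hu.1]
  simp only [chiQ0, if_pos h1, if_pos h2]

lemma muNM_apply (d : ℕ) {S : Set (ℝ × ℝ)} (hS : MeasurableSet S) :
    muNM d S = volume ((fun u => (chiQ0 d u, chiQ0 d (1 - u))) ⁻¹' S ∩ Icc 0 1) := by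
  rw [muNM_eq, Measure.map_apply (measurable_f0 d) hS, Measure.restrict_apply']
  exact measurableSet_Icc

instance (d : ℕ) : IsProbabilityMeasure (muNM d) := by
  constructor
  rw [muNM_apply d MeasurableSet.univ]
  simp [Real.volume_Icc]

lemma chi_Iic_eq (d : ℕ) (a : ℝ) : chi d (Iic a) = ENNReal.ofReal (chiCDF d a) := by
  rw [chiCDF, ENNReal.ofReal_toReal (measure_ne_top _ _)]

lemma chi_Ioi_eq (d : ℕ) (a : ℝ) : chi d (Ioi a) = 1 - ENNReal.ofReal (chiCDF d a) := by
  have : Ioi a = (Iic a)ᶜ := compl_Iic.symm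
  rw [this, measure_compl measurableSet_Iic (measure_ne_top _ _), measure_univ, chi_Iic_eq]
lemma muNM_Ioi_prod_Ioi_le (d : ℕ) (a b : ℝ) :
    muNM d (Ioi a ×ˢ Ioi b) ≤ ENNReal.ofReal (1 - chiCDF d b - chiCDF d a) := by
  rw [muNM_apply d (measurableSet_Ioi.prod measurableSet_Ioi)]
  set Fa := chiCDF d a
  set Fb := chiCDF d b
  have hsub : (fun u => (chiQ0 d u, chiQ0 d (1 - u))) ⁻¹' (Ioi a ×ˢ Ioi b) ∩ Icc 0 1 ⊆
      Ioo Fa (1 - Fb) ∪ {0, 1} := by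
    intro u ⟨hP, hIcc⟩
    rcases eq_or_ne u 0 with rfl | hu0
    · exact Or.inr (Or.inl rfl)
    rcases eq_or_ne u 1 with rfl | hu1
    · exact Or.inr (Or.inr rfl)
    have hu : u ∈ Ioo (0:ℝ) 1 := ⟨hIcc.1.lt_of_ne (Ne.symm hu0), hIcc.2.lt_of_ne hu1⟩
    have h1u : 1 - u ∈ Ioo (0:ℝ) 1 := ⟨by linarith [hu.2], by linarith [hu.1]⟩
    simp only [mem_preimage, mem_prod, mem_Ioi, chiQ0, if_pos hu.2, if_pos h1u.2] at hP
    left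
    constructor
    · by_contra hcon
      have := (chiQuantile_le_iff d hu.1 hu.2 a).2 (not_lt.1 hcon)
      exact absurd hP.1 (not_lt.2 this)
    · by_contra hcon
      have huF : 1 - Fb ≤ u := not_lt.1 hcon
      have : 1 - u ≤ Fb := by linarith
      have := (chiQuantile_le_iff d h1u.1 h1u.2 b).2 this
      exact absurd hP.2 (not_lt.2 this)
  calc volume ((fun u => (chiQ0 d u, chiQ0 d (1 - u))) ⁻¹' (Ioi a ×ˢ Ioi b) ∩ Icc 0 1)
      ≤ volume (Ioo Fa (1 - Fb) ∪ {0, 1}) := measure_mono hsub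
    _ ≤ volume (Ioo Fa (1 - Fb)) + volume ({0, 1} : Set ℝ) := measure_union_le _ _
    _ = ENNReal.ofReal (1 - Fb - Fa) := by
        rw [((finite_singleton (1:ℝ)).insert 0).measure_zero _, add_zero, Real.volume_Ioo]

lemma mu_Ioi_prod_Ioi_ge (d : ℕ) (μ : Measure (ℝ × ℝ)) [IsProbabilityMeasure μ]
    (h1 : μ.map Prod.fst = chi d) (h2 : μ.map Prod.snd = chi d) (a b : ℝ) :
    ENNReal.ofReal (1 - chiCDF d b - chiCDF d a) ≤ μ (Ioi a ×ˢ Ioi b) := by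
  set Fa := chiCDF d a
  set Fb := chiCDF d b
  have hA : μ (Ioi a ×ˢ univ) = 1 - ENNReal.ofReal Fa := by
    rw [prod_univ, ← Measure.map_apply measurable_fst measurableSet_Ioi, h1, chi_Ioi_eq]
  have hB : μ ((univ : Set ℝ) ×ˢ Ioi b) = 1 - ENNReal.ofReal Fb := by
    rw [univ_prod, ← Measure.map_apply measurable_snd measurableSet_Ioi, h2, chi_Ioi_eq]
  have hI : (Ioi a ×ˢ (univ : Set ℝ)) ∩ ((univ : Set ℝ) ×ˢ Ioi b) = Ioi a ×ˢ Ioi b := by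
    rw [prod_inter_prod, inter_univ, univ_inter]
  have key : μ (Ioi a ×ˢ univ) + μ ((univ : Set ℝ) ×ˢ Ioi b) ≤ μ (Ioi a ×ˢ Ioi b) + 1 := by
    rw [← measure_union_add_inter _ (MeasurableSet.univ.prod measurableSet_Ioi), hI, add_comm]
    exact add_le_add_right prob_le_one _
  have hstep : μ (Ioi a ×ˢ univ) + μ ((univ : Set ℝ) ×ˢ Ioi b) - 1 ≤ μ (Ioi a ×ˢ Ioi b) :=
    tsub_le_iff_right.2 key
  refine le_trans (le_of_eq ?_) hstep
  rw [hA, hB]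
  have hFa0 : 0 ≤ Fa := chiCDF_nonneg d a
  have hFb0 : 0 ≤ Fb := chiCDF_nonneg d b
  have hFa1 : Fa ≤ 1 := chiCDF_le_one d a
  have hFb1 : Fb ≤ 1 := chiCDF_le_one d b
  have e1 : (1 : ℝ≥0∞) - ENNReal.ofReal Fa = ENNReal.ofReal (1 - Fa) := by
    rw [ENNReal.ofReal_sub _ hFa0, ENNReal.ofReal_one]
  have e2 : (1 : ℝ≥0∞) - ENNReal.ofReal Fb = ENNReal.ofReal (1 - Fb) := by
    rw [ENNReal.ofReal_sub _ hFb0, ENNReal.ofReal_one]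
  rw [e1, e2, ← ENNReal.ofReal_add (by linarith) (by linarith), ← ENNReal.ofReal_one,
    ← ENNReal.ofReal_sub _ (by norm_num)]
  congr 1
  ring

lemma rect_Ioi_le (d : ℕ) (μ : Measure (ℝ × ℝ)) [IsProbabilityMeasure μ]
    (h1 : μ.map Prod.fst = chi d) (h2 : μ.map Prod.snd = chi d) (a b : ℝ) :
    muNM d (Ioi a ×ˢ Ioi b) ≤ μ (Ioi a ×ˢ Ioi b) :=
  (muNM_Ioi_prod_Ioi_le d a b).trans (mu_Ioi_prod_Ioi_ge d μ h1 h2 a b)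
lemma le_iInter_of {κ₁ κ₂ : Measure (ℝ × ℝ)} [IsFiniteMeasure κ₁] [IsFiniteMeasure κ₂]
    {A : ℕ → Set (ℝ × ℝ)} (hA : ∀ n, MeasurableSet (A n)) (anti : Antitone A)
    (hn : ∀ n, κ₁ (A n) ≤ κ₂ (A n)) : κ₁ (⋂ n, A n) ≤ κ₂ (⋂ n, A n) :=
  le_of_tendsto_of_tendsto'
    (tendsto_measure_iInter_atTop (fun n => (hA n).nullMeasurableSet) anti ⟨0, measure_ne_top _ _⟩)
    (tendsto_measure_iInter_atTop (fun n => (hA n).nullMeasurableSet) anti ⟨0, measure_ne_top _ _⟩)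
    hn

lemma le_iUnion_of {κ₁ κ₂ : Measure (ℝ × ℝ)}
    {A : ℕ → Set (ℝ × ℝ)} (mono : Monotone A)
    (hn : ∀ n, κ₁ (A n) ≤ κ₂ (A n)) : κ₁ (⋃ n, A n) ≤ κ₂ (⋃ n, A n) :=
  le_of_tendsto_of_tendsto' (tendsto_measure_iUnion_atTop mono) (tendsto_measure_iUnion_atTop mono)
    hn

lemma Ici_eq_iInter (b : ℝ) : Ici b = ⋂ (n : ℕ), Ioi (b - 1/(n+1)) := by
  ext x
  simp only [mem_Ici, mem_iInter, mem_Ioi]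
  constructor
  · intro h n
    have : (0:ℝ) < 1/(n+1) := by positivity
    linarith
  · intro h
    by_contra hcon
    obtain ⟨n, hn⟩ := exists_nat_one_div_lt (show (0:ℝ) < b - x by linarith)
    have := h n
    linarith

lemma univ_eq_iUnion : (univ : Set ℝ) = ⋃ (n : ℕ), Ioi (-(n:ℝ)) := by
  ext x
  simp only [mem_univ, mem_iUnion, mem_Ioi, true_iff]
  obtain ⟨n, hn⟩ := exists_nat_gt (-x)
  exact ⟨n, by linarith⟩

lemma isUpperSet_cases {U : Set ℝ} (h : IsUpperSet U) :
    U = ∅ ∨ U = univ ∨ (∃ a, U = Ioi a) ∨ ∃ a, U = Ici a := by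
  rcases eq_empty_or_nonempty U with rfl | hne
  · exact Or.inl rfl
  by_cases hb : BddBelow U
  · set a := sInf U with ha
    have h1 : Ioi a ⊆ U := by
      intro x hx
      obtain ⟨u, huU, hu⟩ := exists_lt_of_csInf_lt hne hx
      exact h hu.le huU
    have h2 : U ⊆ Ici a := fun x hx => csInf_le hb hx
    by_cases haU : a ∈ U
    · refine Or.inr (Or.inr (Or.inr ⟨a, ?_⟩))
      refine Subset.antisymm h2 (fun x hx => ?_)
      rcases eq_or_lt_of_le (mem_Ici.1 hx) with rfl | hlt
      · exact haU
      · exact h1 hlt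
    · refine Or.inr (Or.inr (Or.inl ⟨a, ?_⟩))
      refine Subset.antisymm (fun x hx => ?_) h1
      rcases eq_or_lt_of_le (mem_Ici.1 (h2 hx)) with heq | hlt
      · exact absurd (heq ▸ hx) haU
      · exact hlt
  · refine Or.inr (Or.inl (eq_univ_of_forall fun x => ?_))
    obtain ⟨u, huU, hu⟩ := not_bddBelow_iff.1 hb x
    exact h hu.le huU

lemma rect_upper_le (d : ℕ) (μ : Measure (ℝ × ℝ)) [IsProbabilityMeasure μ]
    (h1 : μ.map Prod.fst = chi d) (h2 : μ.map Prod.snd = chi d) {U V : Set ℝ}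
    (hU : IsUpperSet U) (hV : IsUpperSet V) : muNM d (U ×ˢ V) ≤ μ (U ×ˢ V) := by
  have step1 : ∀ (a : ℝ) (V : Set ℝ), IsUpperSet V → muNM d (Ioi a ×ˢ V) ≤ μ (Ioi a ×ˢ V) := by
    intro a V hV
    rcases isUpperSet_cases hV with rfl | rfl | ⟨b, rfl⟩ | ⟨b, rfl⟩
    · simp
    · rw [univ_eq_iUnion, prod_iUnion]
      refine le_iUnion_of (fun n m hnm => ?_) (fun n => rect_Ioi_le d μ h1 h2 _ _)
      exact prod_mono_right (Ioi_subset_Ioi (by exact_mod_cast neg_le_neg (Nat.cast_le.2 hnm)))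
    · exact rect_Ioi_le d μ h1 h2 a b
    · rw [Ici_eq_iInter, prod_iInter]
      refine le_iInter_of (fun n => measurableSet_Ioi.prod measurableSet_Ioi)
        (fun n m hnm => prod_mono_right (Ioi_subset_Ioi ?_))
        (fun n => rect_Ioi_le d μ h1 h2 _ _)
      have : (1:ℝ)/(m+1) ≤ 1/(n+1) := by
        apply one_div_le_one_div_of_le (by positivity)
        exact_mod_cast add_le_add_left (Nat.cast_le.2 hnm) 1
      linarith
  have hVmeas : MeasurableSet V := hV.ordConnected.measurableSet
  rcases isUpperSet_cases hU with rfl | rfl | ⟨a, rfl⟩ | ⟨a, rfl⟩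
  · simp
  · rw [univ_eq_iUnion, iUnion_prod_const]
    refine le_iUnion_of (fun n m hnm => ?_) (fun n => step1 _ _ hV)
    exact prod_mono_left (Ioi_subset_Ioi (by exact_mod_cast neg_le_neg (Nat.cast_le.2 hnm)))
  · exact step1 a V hV
  · have : Ici a ×ˢ V = ⋂ (n : ℕ), Ioi (a - 1/(n+1)) ×ˢ V := by
      rw [Ici_eq_iInter]
      ext p
      simp only [mem_prod, mem_iInter, mem_Ioi]
      exact ⟨fun h i => ⟨h.1 i, h.2⟩, fun h => ⟨fun i => (h i).1, (h 0).2⟩⟩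
    rw [this]
    refine le_iInter_of (fun n => measurableSet_Ioi.prod hVmeas)
      (fun n m hnm => prod_mono_left (Ioi_subset_Ioi ?_)) (fun n => step1 _ _ hV)
    have : (1:ℝ)/(m+1) ≤ 1/(n+1) := by
      apply one_div_le_one_div_of_le (by positivity)
      exact_mod_cast add_le_add_left (Nat.cast_le.2 hnm) 1
    linarith
lemma layer_cake (κ : Measure (ℝ × ℝ)) [IsFiniteMeasure κ] (g h : ℝ → ℝ)
    (hg : Monotone g) (hh : Monotone h) :
    ∫⁻ p, ENNReal.ofReal (g p.1) * ENNReal.ofReal (h p.2) ∂κ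
      = ∫⁻ st : ℝ × ℝ, κ ({x | 0 < st.1 ∧ st.1 < g x} ×ˢ {y | 0 < st.2 ∧ st.2 < h y})
          ∂((volume : Measure ℝ).prod volume) := by
  set S : Set ((ℝ × ℝ) × (ℝ × ℝ)) :=
    {z | (0 < z.1.1 ∧ z.1.1 < g z.2.1) ∧ (0 < z.1.2 ∧ z.1.2 < h z.2.2)} with hS
  have hSmeas : MeasurableSet S := by
    refine MeasurableSet.inter (MeasurableSet.inter ?_ ?_) (MeasurableSet.inter ?_ ?_)
    · exact measurableSet_lt measurable_const measurable_fst.fst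
    · exact measurableSet_lt measurable_fst.fst (hg.measurable.comp measurable_snd.fst)
    · exact measurableSet_lt measurable_const measurable_fst.snd
    · exact measurableSet_lt measurable_fst.snd (hh.measurable.comp measurable_snd.snd)
  have key1 : ∀ p : ℝ × ℝ, ENNReal.ofReal (g p.1) * ENNReal.ofReal (h p.2)
      = ∫⁻ st : ℝ × ℝ, S.indicator 1 (st, p) ∂((volume : Measure ℝ).prod volume) := by
    intro p
    have hmem : ∀ st : ℝ × ℝ, S.indicator 1 (st, p)
        = (Ioo 0 (g p.1) ×ˢ Ioo 0 (h p.2)).indicator (1 : ℝ × ℝ → ℝ≥0∞) st := by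
      intro st
      simp only [Set.indicator_apply, hS, mem_setOf_eq, mem_prod, mem_Ioo, Pi.one_apply]
    simp_rw [hmem]
    rw [lintegral_indicator_one (measurableSet_Ioo.prod measurableSet_Ioo),
      Measure.prod_prod, Real.volume_Ioo, Real.volume_Ioo, sub_zero, sub_zero]
  have key2 : ∀ st : ℝ × ℝ, κ ({x | 0 < st.1 ∧ st.1 < g x} ×ˢ {y | 0 < st.2 ∧ st.2 < h y})
      = ∫⁻ p : ℝ × ℝ, S.indicator 1 (st, p) ∂κ := by
    intro st
    have hmem : ∀ p : ℝ × ℝ, S.indicator 1 (st, p)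
        = (({x | 0 < st.1 ∧ st.1 < g x} ×ˢ {y | 0 < st.2 ∧ st.2 < h y}).indicator
            (1 : ℝ × ℝ → ℝ≥0∞)) p := by
      intro p
      simp only [Set.indicator_apply, hS, mem_setOf_eq, mem_prod, Pi.one_apply]
    simp_rw [hmem]
    rw [lintegral_indicator_one]
    refine MeasurableSet.prod ?_ ?_
    · exact (MeasurableSet.const _).inter (measurableSet_lt measurable_const hg.measurable)
    · exact (MeasurableSet.const _).inter (measurableSet_lt measurable_const hh.measurable)
  simp_rw [key1, key2]
  apply lintegral_lintegral_swap
  exact ((measurable_one.indicator hSmeas).comp measurable_swap).aemeasurable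

lemma core_le (d : ℕ) (μ : Measure (ℝ × ℝ)) [IsProbabilityMeasure μ]
    (h1 : μ.map Prod.fst = chi d) (h2 : μ.map Prod.snd = chi d) (g h : ℝ → ℝ)
    (hg : Monotone g) (hh : Monotone h) :
    ∫⁻ p, ENNReal.ofReal (g p.1) * ENNReal.ofReal (h p.2) ∂(muNM d)
      ≤ ∫⁻ p, ENNReal.ofReal (g p.1) * ENNReal.ofReal (h p.2) ∂μ := by
  rw [layer_cake _ g h hg hh, layer_cake _ g h hg hh]
  refine lintegral_mono (fun st => ?_)
  refine rect_upper_le d μ h1 h2 ?_ ?_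
  · intro x y hxy hx
    exact ⟨hx.1, hx.2.trans_le (hg hxy)⟩
  · intro x y hxy hx
    exact ⟨hx.1, hx.2.trans_le (hh hxy)⟩
lemma gamma_arg_pos (d : ℕ) (hd : 1 ≤ d) (k : ℕ) : (0:ℝ) < (k:ℝ) + d/2 := by
  have : (1:ℝ) ≤ (d:ℝ) := by exact_mod_cast hd
  have : (0:ℝ) ≤ (k:ℝ) := Nat.cast_nonneg k
  linarith

lemma term_nonneg (d : ℕ) (hd : 1 ≤ d) {v z : ℝ} (hv : 0 ≤ v) (hz : 0 ≤ z) (k : ℕ) :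
    0 ≤ v ^ (2*k) * z ^ k / (4^k * (Nat.factorial k : ℝ) * Real.Gamma ((k:ℝ) + d/2)) := by
  have hΓ : 0 < Real.Gamma ((k:ℝ) + d/2) := Real.Gamma_pos_of_pos (gamma_arg_pos d hd k)
  have hden : (0:ℝ) < 4^k * (Nat.factorial k : ℝ) * Real.Gamma ((k:ℝ) + d/2) := by
    have h4 : (0:ℝ) < 4^k := by positivity
    have hfac : (0:ℝ) < (Nat.factorial k : ℝ) := by exact_mod_cast (Nat.factorial_pos k)
    positivity
  exact div_nonneg (mul_nonneg (pow_nonneg hv _) (pow_nonneg hz _)) hden.le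

lemma summable_cRLF (d : ℕ) (hd : 1 ≤ d) {v z : ℝ} (hv : 0 ≤ v) (hz : 0 ≤ z) :
    Summable (fun k : ℕ =>
      v ^ (2*k) * z ^ k / (4^k * (Nat.factorial k : ℝ) * Real.Gamma ((k:ℝ) + d/2))) := by
  set a : ℕ → ℝ := fun k =>
    v ^ (2*k) * z ^ k / (4^k * (Nat.factorial k : ℝ) * Real.Gamma ((k:ℝ) + d/2)) with ha
  have hΓ : ∀ k : ℕ, 0 < Real.Gamma ((k:ℝ) + d/2) :=
    fun k => Real.Gamma_pos_of_pos (gamma_arg_pos d hd k)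
  have hnn : ∀ k, 0 ≤ a k := term_nonneg d hd hv hz
  obtain ⟨N, hN⟩ := exists_nat_ge (v^2 * z)
  apply summable_of_ratio_norm_eventually_le (r := 1/2) (by norm_num)
  filter_upwards [Filter.eventually_ge_atTop (max N 1)] with k hk
  rw [Real.norm_eq_abs, Real.norm_eq_abs, abs_of_nonneg (hnn _), abs_of_nonneg (hnn _)]
  have hk1 : (1:ℝ) ≤ (k:ℝ) := by exact_mod_cast le_trans (le_max_right N 1) hk
  have hkN : v^2 * z ≤ (k:ℝ) := hN.trans (by exact_mod_cast le_trans (le_max_left N 1) hk)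
  have hd2 : (1:ℝ)/2 ≤ (d:ℝ)/2 := by
    have : (1:ℝ) ≤ (d:ℝ) := by exact_mod_cast hd
    linarith
  have hrec : a (k+1) = a k * ((v^2 * z) / (4 * ((k:ℝ)+1) * ((k:ℝ) + d/2))) := by
    have hΓrec : Real.Gamma (((k+1:ℕ):ℝ) + d/2) = ((k:ℝ) + d/2) * Real.Gamma ((k:ℝ) + d/2) := by
      have heq : ((k+1:ℕ):ℝ) + d/2 = ((k:ℝ) + d/2) + 1 := by push_cast; ring
      rw [heq, Real.Gamma_add_one (ne_of_gt (gamma_arg_pos d hd k))]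
    have hfac : ((Nat.factorial (k+1) : ℕ) : ℝ) = ((k:ℝ)+1) * (Nat.factorial k : ℝ) := by
      rw [Nat.factorial_succ]; push_cast; ring
    rw [ha]
    simp only
    rw [hΓrec, hfac]
    have e1 : v ^ (2*(k+1)) = v ^ (2*k) * v^2 := by rw [← pow_add]; ring_nf
    have e2 : z ^ (k+1) = z ^ k * z := pow_succ z k
    have e3 : (4:ℝ) ^ (k+1) = 4^k * 4 := pow_succ 4 k
    rw [e1, e2, e3]
    have h4 : (4:ℝ)^k ≠ 0 := by positivity
    have hfk : (Nat.factorial k : ℝ) ≠ 0 := by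
      exact_mod_cast (Nat.factorial_pos k).ne'
    have hΓk : Real.Gamma ((k:ℝ) + d/2) ≠ 0 := (hΓ k).ne'
    have hk1' : ((k:ℝ)+1) ≠ 0 := by positivity
    have hkd : ((k:ℝ) + d/2) ≠ 0 := (gamma_arg_pos d hd k).ne'
    field_simp
  rw [hrec]
  have hratio : (v^2 * z) / (4 * ((k:ℝ)+1) * ((k:ℝ) + d/2)) ≤ 1/2 := by
    rw [div_le_iff₀ (by nlinarith)]
    nlinarith
  calc a k * ((v^2 * z) / (4 * ((k:ℝ)+1) * ((k:ℝ) + d/2)))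
      ≤ a k * (1/2) := by
        apply mul_le_mul_of_nonneg_left hratio (hnn k)
    _ = 1/2 * a k := by ring
def G (j : ℕ) (x : ℝ) : ℝ := ((max x 0)^2)^j

lemma G_mono (j : ℕ) : Monotone (G j) := by
  intro x y hxy
  have h1 : max x 0 ≤ max y 0 := max_le_max hxy le_rfl
  have h0 : (0:ℝ) ≤ max x 0 := le_max_right x 0
  exact pow_le_pow_left₀ (by positivity) (pow_le_pow_left₀ h0 h1 2) j

lemma G_eq {x : ℝ} (hx : 0 ≤ x) (j : ℕ) : G j x = (x^2)^j := by
  rw [G, max_eq_left hx]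

lemma G_nonneg (j : ℕ) (x : ℝ) : 0 ≤ G j x := pow_nonneg (sq_nonneg _) j

lemma binom_pointwise (k : ℕ) {x y : ℝ} (hx : 0 ≤ x) (hy : 0 ≤ y) :
    ENNReal.ofReal ((x^2+y^2)^k)
      = ∑ j ∈ Finset.range (k+1), ENNReal.ofReal ((k.choose j : ℝ))
          * (ENNReal.ofReal (G j x) * ENNReal.ofReal (G (k-j) y)) := by
  rw [add_pow]
  rw [ENNReal.ofReal_sum_of_nonneg (fun j _ => by positivity)]
  refine Finset.sum_congr rfl (fun j _ => ?_)
  rw [G_eq hx, G_eq hy]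
  rw [show (x^2)^j * (y^2)^(k-j) * ((k.choose j : ℕ) : ℝ)
      = ((k.choose j : ℕ) : ℝ) * ((x^2)^j * (y^2)^(k-j)) by ring]
  rw [ENNReal.ofReal_mul (by positivity), ENNReal.ofReal_mul (by positivity)]

lemma measurable_Gprod (j m : ℕ) :
    Measurable (fun p : ℝ × ℝ => ENNReal.ofReal (G j p.1) * ENNReal.ofReal (G m p.2)) :=
  ((ENNReal.measurable_ofReal.comp ((G_mono j).measurable.comp measurable_fst)).mul
    (ENNReal.measurable_ofReal.comp ((G_mono m).measurable.comp measurable_snd)))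

lemma binom_integral (κ : Measure (ℝ × ℝ)) (hae : ∀ᵐ p ∂κ, 0 ≤ p.1 ∧ 0 ≤ p.2) (k : ℕ) :
    ∫⁻ p, ENNReal.ofReal ((p.1^2+p.2^2)^k) ∂κ
      = ∑ j ∈ Finset.range (k+1), ENNReal.ofReal ((k.choose j : ℝ))
          * ∫⁻ p, ENNReal.ofReal (G j p.1) * ENNReal.ofReal (G (k-j) p.2) ∂κ := by
  have h1 : ∫⁻ p, ENNReal.ofReal ((p.1^2+p.2^2)^k) ∂κ
      = ∫⁻ p, ∑ j ∈ Finset.range (k+1), ENNReal.ofReal ((k.choose j : ℝ))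
          * (ENNReal.ofReal (G j p.1) * ENNReal.ofReal (G (k-j) p.2)) ∂κ := by
    apply lintegral_congr_ae
    filter_upwards [hae] with p hp
    exact binom_pointwise k hp.1 hp.2
  rw [h1, lintegral_finset_sum]
  · refine Finset.sum_congr rfl (fun j _ => ?_)
    rw [lintegral_const_mul _ (measurable_Gprod j (k-j))]
  · exact fun j _ => (measurable_const.mul (measurable_Gprod j (k-j)))

lemma ae_nonneg_mu (d : ℕ) (μ : Measure (ℝ × ℝ)) [IsProbabilityMeasure μ]
    (h1 : μ.map Prod.fst = chi d) (h2 : μ.map Prod.snd = chi d) :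
    ∀ᵐ p ∂μ, 0 ≤ p.1 ∧ 0 ≤ p.2 := by
  rw [ae_iff]
  refine measure_mono_null (t := (Prod.fst ⁻¹' Iio 0) ∪ (Prod.snd ⁻¹' Iio 0)) ?_ ?_
  · intro p hp
    simp only [mem_setOf_eq, not_and_or, not_le] at hp
    exact hp.imp (fun h => h) (fun h => h)
  · refine measure_union_null ?_ ?_
    · rw [← Measure.map_apply measurable_fst measurableSet_Iio, h1, chi,
        Measure.map_apply measurable_norm measurableSet_Iio]
      convert measure_empty
      · ext x
        simp only [mem_preimage, mem_Iio, mem_empty_iff_false, iff_false, not_lt]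
        exact norm_nonneg x
      · infer_instance
    · rw [← Measure.map_apply measurable_snd measurableSet_Iio, h2, chi,
        Measure.map_apply measurable_norm measurableSet_Iio]
      convert measure_empty
      · ext x
        simp only [mem_preimage, mem_Iio, mem_empty_iff_false, iff_false, not_lt]
        exact norm_nonneg x
      · infer_instance

lemma ae_nonneg_muNM (d : ℕ) : ∀ᵐ p ∂(muNM d), 0 ≤ p.1 ∧ 0 ≤ p.2 := by
  rw [ae_iff]
  have hmeas : MeasurableSet {p : ℝ × ℝ | ¬(0 ≤ p.1 ∧ 0 ≤ p.2)} := by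
    refine MeasurableSet.compl ?_
    exact (measurableSet_le measurable_const measurable_fst).inter
      (measurableSet_le measurable_const measurable_snd)
  rw [muNM_apply d hmeas]
  convert measure_empty
  · ext u
    simp only [mem_inter_iff, mem_preimage, mem_setOf_eq, not_and_or, not_le,
      mem_empty_iff_false, iff_false]
    refine Or.inl ?_
    rintro (h | h)
    · exact absurd h (not_lt.2 (chiQ0_nonneg d u))
    · exact absurd h (not_lt.2 (chiQ0_nonneg d (1-u)))
  · infer_instance
def cRLF (d : ℕ) (v : ℝ) (x y : ℝ) : ℝ :=
  ∑' k : ℕ,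
    v ^ (2 * k) * (x ^ 2 + y ^ 2) ^ k /
      (4 ^ k * (Nat.factorial k) * Real.Gamma ((k : ℝ) + d / 2))

lemma measurable_powsum (k : ℕ) :
    Measurable (fun p : ℝ × ℝ => ENNReal.ofReal ((p.1^2 + p.2^2)^k)) :=
  ENNReal.measurable_ofReal.comp
    (((measurable_fst.pow_const 2).add (measurable_snd.pow_const 2)).pow_const k)

lemma expand_cRLF (d : ℕ) (hd : 1 ≤ d) (v : ℝ) (hv : 0 ≤ v) (κ : Measure (ℝ × ℝ)) :
    ∫⁻ p, ENNReal.ofReal (cRLF d v p.1 p.2) ∂κ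
      = ∑' k : ℕ, ENNReal.ofReal (v ^ (2*k) / (4^k * (Nat.factorial k : ℝ)
            * Real.Gamma ((k:ℝ) + d/2)))
          * ∫⁻ p, ENNReal.ofReal ((p.1^2 + p.2^2)^k) ∂κ := by
  have hpt : ∀ p : ℝ × ℝ, ENNReal.ofReal (cRLF d v p.1 p.2)
      = ∑' k : ℕ, ENNReal.ofReal (v ^ (2*k) / (4^k * (Nat.factorial k : ℝ)
            * Real.Gamma ((k:ℝ) + d/2)))
          * ENNReal.ofReal ((p.1^2 + p.2^2)^k) := by
    intro p
    have hz : (0:ℝ) ≤ p.1^2 + p.2^2 := by positivity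
    rw [cRLF, ENNReal.ofReal_tsum_of_nonneg (fun k => term_nonneg d hd hv hz k)
      (summable_cRLF d hd hv hz)]
    congr 1
    funext k
    have hΓ : 0 < Real.Gamma ((k:ℝ) + d/2) := Real.Gamma_pos_of_pos (gamma_arg_pos d hd k)
    have hD : (0:ℝ) < 4^k * (Nat.factorial k : ℝ) * Real.Gamma ((k:ℝ) + d/2) := by
      have hfac : (0:ℝ) < (Nat.factorial k : ℝ) := by exact_mod_cast (Nat.factorial_pos k)
      positivity
    rw [show v ^ (2*k) * (p.1^2 + p.2^2)^k / (4^k * (Nat.factorial k : ℝ)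
          * Real.Gamma ((k:ℝ) + d/2))
        = (v ^ (2*k) / (4^k * (Nat.factorial k : ℝ) * Real.Gamma ((k:ℝ) + d/2)))
          * (p.1^2 + p.2^2)^k by field_simp]
    rw [ENNReal.ofReal_mul (div_nonneg (pow_nonneg hv _) hD.le)]
  simp_rw [hpt]
  rw [lintegral_tsum (fun k => ((measurable_powsum k).const_mul _).aemeasurable)]
  congr 1
  funext k
  rw [lintegral_const_mul _ (measurable_powsum k)]

theorem negativeMonotone_minimizes_cRLF (d : ℕ) (hd : 1 ≤ d) (v : ℝ) (hv : 0 ≤ v)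
    (μ : Measure (ℝ × ℝ)) [IsProbabilityMeasure μ]
    (h1 : μ.map Prod.fst = chi d) (h2 : μ.map Prod.snd = chi d) :
    ∫⁻ p, ENNReal.ofReal (cRLF d v p.1 p.2) ∂(muNM d) ≤
      ∫⁻ p, ENNReal.ofReal (cRLF d v p.1 p.2) ∂μ := by
  rw [expand_cRLF d hd v hv (muNM d), expand_cRLF d hd v hv μ]
  refine ENNReal.tsum_le_tsum (fun k => ?_)
  refine mul_le_mul_right ?_ _
  rw [binom_integral (muNM d) (ae_nonneg_muNM d) k, binom_integral μ (ae_nonneg_mu d μ h1 h2) k]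
  refine Finset.sum_le_sum (fun j _ => ?_)
  exact mul_le_mul_right (core_le d μ h1 h2 (G j) (G (k-j)) (G_mono j) (G_mono (k-j))) _

end
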